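/- Fix n ≥ 1. For each ordered pair (i, j) with i ≠ j let R_{ij} : ℝ → ℝ be a C¹ function with everywhere nonnegative derivative, for each i let R_i : ℝ → ℝ be a C¹ function with everywhere nonnegative derivative, and let u_1,…,u_n ≥ 0 be real constants. Let x : ℝ → ℝⁿ be differentiable and satisfy, for all t ∈ ℝ and all i ∈ {1,…,n}: x_i'(t) = Σ_{j≠i} ( R_{ji}(x_j(t)) − R_{ij}(x_i(t)) ) + u_i − R_i(x_i(t)). Then the function t ↦ Σ_{i=1}^n |x_i'(t)| is nonincreasing on ℝ. -/

import Mathlib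

open Finset


lemma phi_pos (ε y : ℝ) (hε : 0 < ε) : 0 < Real.sqrt (y^2 + ε^2) :=
  Real.sqrt_pos.2 (by positivity)

lemma eps_le_phi (ε y : ℝ) (hε : 0 ≤ ε) : ε ≤ Real.sqrt (y^2 + ε^2) := by
  calc ε = Real.sqrt (ε^2) := (Real.sqrt_sq hε).symm
  _ ≤ _ := Real.sqrt_le_sqrt (by nlinarith [sq_nonneg y])

lemma abs_le_phi (ε y : ℝ) : |y| ≤ Real.sqrt (y^2 + ε^2) := by
  calc |y| = Real.sqrt (y^2) := (Real.sqrt_sq_eq_abs y).symm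
  _ ≤ _ := Real.sqrt_le_sqrt (by nlinarith [sq_nonneg ε])

lemma phi_le (ε y : ℝ) (hε : 0 ≤ ε) : Real.sqrt (y^2 + ε^2) ≤ |y| + ε := by
  have h : y^2 + ε^2 ≤ (|y| + ε)^2 := by nlinarith [abs_nonneg y, sq_abs y]
  calc Real.sqrt (y^2 + ε^2) ≤ Real.sqrt ((|y|+ε)^2) := Real.sqrt_le_sqrt h
  _ = |y| + ε := Real.sqrt_sq (by positivity)

lemma sq_div_phi (ε y : ℝ) (hε : 0 < ε) :
    Real.sqrt (y^2 + ε^2) - ε ≤ y^2 / Real.sqrt (y^2 + ε^2) := by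
  have hp := phi_pos ε y hε
  have hsq : Real.sqrt (y^2+ε^2) ^ 2 = y^2 + ε^2 := Real.sq_sqrt (by positivity)
  refine (le_div_iff₀ hp).2 ?_
  nlinarith [eps_le_phi ε y hε.le]

lemma hasDerivAt_phi (ε y : ℝ) (hε : 0 < ε) :
    HasDerivAt (fun z : ℝ => Real.sqrt (z^2 + ε^2)) (y / Real.sqrt (y^2 + ε^2)) y := by
  have h1 : HasDerivAt (fun z : ℝ => z^2 + ε^2) (2*y) y := by
    simpa using ((hasDerivAt_pow 2 y).add_const (ε^2))
  have h2 := (Real.hasDerivAt_sqrt (x := y^2 + ε^2) (by positivity)).comp y h1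
  have h3 : HasDerivAt (fun z : ℝ => Real.sqrt (z^2 + ε^2))
      (1/(2*Real.sqrt (y^2+ε^2)) * (2*y)) y := by
    exact h2
  convert h3 using 1
  field_simp

/-- Core lemma: if `v i` satisfies a linear time-varying ODE with Metzler
coefficient matrix having nonpositive column sums, then `∑ |v i|` is antitone. -/
lemma soc_core (n : ℕ) (v : Fin n → ℝ → ℝ) (a : Fin n → Fin n → ℝ → ℝ)
    (b : Fin n → ℝ → ℝ)
    (ha : ∀ i j t, i ≠ j → 0 ≤ a i j t) (hb : ∀ i t, 0 ≤ b i t)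
    (hac : ∀ i j, i ≠ j → Continuous (a i j)) (hbc : ∀ i, Continuous (b i))
    (hv : ∀ i t, HasDerivAt (v i)
      ((∑ j ∈ Finset.univ.erase i, (a j i t * v j t - a i j t * v i t))
        - b i t * v i t) t) :
    Antitone (fun t : ℝ => ∑ i : Fin n, |v i t|) := by
  intro t₀ t₁ ht
  simp only
  -- continuity of v
  have hvc : ∀ i, Continuous (v i) := fun i =>
    Differentiable.continuous (fun t => (hv i t).differentiableAt)
  -- the total rate function C
  set Cf : ℝ → ℝ := fun τ => ∑ i : Fin n,
    ((∑ j ∈ Finset.univ.erase i, a i j τ) + b i τ) with hCf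
  have hCc : Continuous Cf := by
    apply continuous_finset_sum
    intro i _
    exact (continuous_finset_sum _ fun j hj =>
      hac i j (Ne.symm (Finset.mem_erase.1 hj).1)).add (hbc i)
  have hC0 : ∀ τ, 0 ≤ Cf τ := by
    intro τ
    refine Finset.sum_nonneg fun i _ => add_nonneg
      (Finset.sum_nonneg fun j hj => ha i j τ (Ne.symm (Finset.mem_erase.1 hj).1))
      (hb i τ)
  obtain ⟨M, hM⟩ := isCompact_Icc.exists_bound_of_continuousOn
    (s := Set.Icc t₀ t₁) hCc.continuousOn
  have hCM : ∀ τ ∈ Set.Icc t₀ t₁, Cf τ ≤ M := fun τ h =>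
    (le_abs_self _).trans (by simpa [Real.norm_eq_abs] using hM τ h)
  have hM0 : 0 ≤ M := (hC0 t₀).trans (hCM t₀ ⟨le_rfl, ht⟩)
  -- reduce to an ε-perturbed bound
  refine le_of_forall_pos_le_add fun δ hδ => ?_
  set K : ℝ := (n : ℝ) + M * (t₁ - t₀) with hK
  have hK0 : 0 ≤ K := by
    have : (0:ℝ) ≤ (n:ℝ) := Nat.cast_nonneg n
    nlinarith [sub_nonneg.2 ht]
  set ε : ℝ := δ / (K + 1) with hεdef
  have hε : 0 < ε := div_pos hδ (by linarith)
  -- it suffices to prove the ε-smoothed estimate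
  suffices h : (∑ i : Fin n, |v i t₁|) ≤ (∑ i : Fin n, |v i t₀|) + ε * K by
    have hεK : ε * (K + 1) = δ := by
      rw [hεdef]; exact div_mul_cancel₀ δ (by linarith : K + 1 ≠ 0)
    nlinarith [hε]
  -- the smoothed sum of currents
  set W : ℝ → ℝ := fun τ => ∑ i : Fin n, Real.sqrt ((v i τ)^2 + ε^2) with hW
  -- W has the expected derivative
  have hWd : ∀ τ, HasDerivAt W
      (∑ i : Fin n, (v i τ / Real.sqrt ((v i τ)^2 + ε^2)) *
        ((∑ j ∈ Finset.univ.erase i, (a j i τ * v j τ - a i j τ * v i τ))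
          - b i τ * v i τ)) τ := by
    intro τ
    refine HasDerivAt.fun_sum fun i _ => ?_
    have h1 := (hasDerivAt_phi ε (v i τ) hε).comp τ (hv i τ)
    exact h1
  -- pointwise derivative bound on the interval
  have hDb : ∀ τ ∈ Set.Icc t₀ t₁,
      (∑ i : Fin n, (v i τ / Real.sqrt ((v i τ)^2 + ε^2)) *
        ((∑ j ∈ Finset.univ.erase i, (a j i τ * v j τ - a i j τ * v i τ))
          - b i τ * v i τ)) ≤ ε * M := by
    intro τ hτ
    set p : Fin n → ℝ := fun i => v i τ with hp
    set φ : Fin n → ℝ := fun i => Real.sqrt ((p i)^2 + ε^2) with hφ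
    have hφpos : ∀ i, 0 < φ i := fun i => phi_pos ε (p i) hε
    -- step A: per-coordinate bound
    have stepA : ∀ i : Fin n,
        (p i / φ i) * ((∑ j ∈ Finset.univ.erase i,
            (a j i τ * p j - a i j τ * p i)) - b i τ * p i)
        ≤ (∑ j ∈ Finset.univ.erase i,
            (a j i τ * φ j - a i j τ * (φ i - ε))) - b i τ * (φ i - ε) := by
      intro i
      have hcpi : φ i - ε ≤ (p i / φ i) * p i := by
        have : (p i / φ i) * p i = (p i)^2 / φ i := by
          rw [div_mul_eq_mul_div, sq]
        rw [this]
        exact sq_div_phi ε (p i) hε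
      have hcabs : ∀ j, (p i / φ i) * p j ≤ φ j := by
        intro j
        calc (p i / φ i) * p j ≤ |(p i / φ i) * p j| := le_abs_self _
        _ = |p i| / φ i * |p j| := by
            rw [abs_mul, abs_div, abs_of_pos (hφpos i)]
        _ ≤ 1 * |p j| := by
            refine mul_le_mul_of_nonneg_right ?_ (abs_nonneg _)
            exact div_le_one_of_le₀ (abs_le_phi ε (p i)) (hφpos i).le
        _ = |p j| := one_mul _
        _ ≤ φ j := abs_le_phi ε (p j)
      rw [mul_sub, Finset.mul_sum]
      refine sub_le_sub ?_ ?_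
      · refine Finset.sum_le_sum fun j hj => ?_
        have hji : j ≠ i := (Finset.mem_erase.1 hj).1
        have e1 : (p i / φ i) * (a j i τ * p j - a i j τ * p i)
            = a j i τ * ((p i / φ i) * p j) - a i j τ * ((p i / φ i) * p i) := by
          ring
        rw [e1]
        refine sub_le_sub
          (mul_le_mul_of_nonneg_left (hcabs j) (ha j i τ hji))
          (mul_le_mul_of_nonneg_left hcpi (ha i j τ hji.symm))
      · have e2 : (p i / φ i) * (b i τ * p i) = b i τ * ((p i / φ i) * p i) := by
          ring
        rw [e2]
        exact mul_le_mul_of_nonneg_left hcpi (hb i τ)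
    -- sum step A over i and rearrange
    have swap : (∑ i : Fin n, ∑ j ∈ Finset.univ.erase i, a j i τ * φ j)
        = ∑ i : Fin n, ∑ j ∈ Finset.univ.erase i, a i j τ * φ i := by
      refine Finset.sum_comm' ?_
      intro i j
      simp [Finset.mem_erase, eq_comm, ne_comm]
    calc (∑ i : Fin n, (p i / φ i) *
          ((∑ j ∈ Finset.univ.erase i, (a j i τ * p j - a i j τ * p i))
            - b i τ * p i))
        ≤ ∑ i : Fin n, ((∑ j ∈ Finset.univ.erase i,
            (a j i τ * φ j - a i j τ * (φ i - ε))) - b i τ * (φ i - ε)) :=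
          Finset.sum_le_sum fun i _ => stepA i
      _ = ∑ i : Fin n, ((∑ j ∈ Finset.univ.erase i, a j i τ * φ j)
            - (∑ j ∈ Finset.univ.erase i, a i j τ * (φ i - ε)) - b i τ * (φ i - ε)) := by
          simp [Finset.sum_sub_distrib]
      _ = (∑ i : Fin n, ∑ j ∈ Finset.univ.erase i, a j i τ * φ j)
            - (∑ i : Fin n, ((∑ j ∈ Finset.univ.erase i, a i j τ * (φ i - ε))
              + b i τ * (φ i - ε))) := by
          rw [← Finset.sum_sub_distrib]
          congr 1; ext i; ring
      _ = ∑ i : Fin n, ((∑ j ∈ Finset.univ.erase i, a i j τ * φ i)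
            - (∑ j ∈ Finset.univ.erase i, a i j τ * (φ i - ε))
            - b i τ * (φ i - ε)) := by
          rw [swap, ← Finset.sum_sub_distrib]
          congr 1; ext i; ring
      _ = ∑ i : Fin n, (ε * (∑ j ∈ Finset.univ.erase i, a i j τ)
            + ε * b i τ - b i τ * φ i) := by
          congr 1; ext i
          rw [← Finset.sum_sub_distrib]
          rw [Finset.mul_sum]
          have : ∀ j, a i j τ * φ i - a i j τ * (φ i - ε) = ε * a i j τ := by
            intro j; ring
          simp only [this]
          ring
      _ ≤ ∑ i : Fin n, (ε * (∑ j ∈ Finset.univ.erase i, a i j τ) + ε * b i τ) := by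
          refine Finset.sum_le_sum fun i _ => ?_
          have : 0 ≤ b i τ * φ i := mul_nonneg (hb i τ) (hφpos i).le
          linarith
      _ = ε * Cf τ := by
          rw [hCf, Finset.mul_sum]
          congr 1; ext i; ring
      _ ≤ ε * M := mul_le_mul_of_nonneg_left (hCM τ hτ) hε.le
  -- the perturbed function g is antitone on [t₀, t₁]
  set g : ℝ → ℝ := fun τ => W τ - ε * M * τ with hg
  have hgd : ∀ τ, HasDerivAt g
      ((∑ i : Fin n, (v i τ / Real.sqrt ((v i τ)^2 + ε^2)) *
        ((∑ j ∈ Finset.univ.erase i, (a j i τ * v j τ - a i j τ * v i τ))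
          - b i τ * v i τ)) - ε * M) τ := by
    intro τ
    have hlin : HasDerivAt (fun τ : ℝ => ε * M * τ) (ε * M) τ := by
      simpa using (hasDerivAt_id τ).const_mul (ε * M)
    exact (hWd τ).sub hlin
  have hganti : AntitoneOn g (Set.Icc t₀ t₁) := by
    refine antitoneOn_of_deriv_nonpos (convex_Icc t₀ t₁)
      (fun τ _ => ((hgd τ).differentiableAt).continuousAt.continuousWithinAt)
      (fun τ _ => ((hgd τ).differentiableAt).differentiableWithinAt) ?_
    intro τ hτ
    have hτ' : τ ∈ Set.Icc t₀ t₁ := interior_subset hτ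
    rw [(hgd τ).deriv]
    have := hDb τ hτ'
    linarith
  have hgle : g t₁ ≤ g t₀ := hganti ⟨le_rfl, ht⟩ ⟨ht, le_rfl⟩ ht
  -- conclude
  have hWle : W t₁ ≤ W t₀ + ε * M * (t₁ - t₀) := by
    simp only [hg] at hgle
    linarith
  have h1 : (∑ i : Fin n, |v i t₁|) ≤ W t₁ :=
    Finset.sum_le_sum fun i _ => abs_le_phi ε (v i t₁)
  have h2 : W t₀ ≤ (∑ i : Fin n, |v i t₀|) + (n : ℝ) * ε := by
    calc W t₀ ≤ ∑ i : Fin n, (|v i t₀| + ε) :=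
        Finset.sum_le_sum fun i _ => phi_le ε (v i t₀) hε.le
    _ = (∑ i : Fin n, |v i t₀|) + (n : ℝ) * ε := by
        rw [Finset.sum_add_distrib, Finset.sum_const, Finset.card_univ,
          Fintype.card_fin, nsmul_eq_mul]
  have : (∑ i : Fin n, |v i t₁|) ≤ (∑ i : Fin n, |v i t₀|) + (n : ℝ) * ε
      + ε * M * (t₁ - t₀) := by linarith
  rw [hK]
  nlinarith [this]

/-- For a linear (compartmental) network with monotone `C¹` kinetics
`R i j` (reaction `X i → X j`), outflows `Rout i` (`X i → ∅`) and constant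
inflows `u i`, the Sum-of-Currents function `V(t) = Σ_i |x_i'(t)|` is
nonincreasing along every trajectory. -/
theorem soc_rlf_linear (n : ℕ) (hn : 1 ≤ n)
    (R : Fin n → Fin n → ℝ → ℝ) (Rout : Fin n → ℝ → ℝ) (u : Fin n → ℝ)
    (hRC1 : ∀ i j, i ≠ j → ContDiff ℝ 1 (R i j))
    (hRmono : ∀ i j, i ≠ j → ∀ y : ℝ, 0 ≤ deriv (R i j) y)
    (hRoC1 : ∀ i, ContDiff ℝ 1 (Rout i))
    (hRomono : ∀ i, ∀ y : ℝ, 0 ≤ deriv (Rout i) y)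
    (hu : ∀ i, 0 ≤ u i)
    (x : ℝ → Fin n → ℝ)
    (hx : ∀ i, Differentiable ℝ (fun t => x t i))
    (hode : ∀ t : ℝ, ∀ i : Fin n, deriv (fun s => x s i) t =
      (∑ j ∈ Finset.univ.erase i, (R j i (x t j) - R i j (x t i))) + u i
        - Rout i (x t i)) :
    Antitone (fun t : ℝ => ∑ i : Fin n, |deriv (fun s => x s i) t|) := by
  have hv : ∀ i t, HasDerivAt (fun τ => deriv (fun s => x s i) τ)
      ((∑ j ∈ Finset.univ.erase i,
        (deriv (R j i) (x t j) * deriv (fun s => x s j) t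
          - deriv (R i j) (x t i) * deriv (fun s => x s i) t))
        - deriv (Rout i) (x t i) * deriv (fun s => x s i) t) t := by
    intro i t
    have hfun : (fun τ => deriv (fun s => x s i) τ)
        = fun τ => (∑ j ∈ Finset.univ.erase i,
            (R j i (x τ j) - R i j (x τ i))) + u i - Rout i (x τ i) :=
      funext fun τ => hode τ i
    rw [hfun]
    have hsum : HasDerivAt (fun τ => ∑ j ∈ Finset.univ.erase i,
        (R j i (x τ j) - R i j (x τ i)))
        (∑ j ∈ Finset.univ.erase i,
          (deriv (R j i) (x t j) * deriv (fun s => x s j) t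
            - deriv (R i j) (x t i) * deriv (fun s => x s i) t)) t := by
      refine HasDerivAt.fun_sum fun j hj => ?_
      have hji : j ≠ i := (Finset.mem_erase.1 hj).1
      have h1 : HasDerivAt (fun τ => R j i (x τ j))
          (deriv (R j i) (x t j) * deriv (fun s => x s j) t) t := by
        have := ((((hRC1 j i hji).differentiable one_ne_zero) (x t j)).hasDerivAt).comp t
          (((hx j) t).hasDerivAt)
        exact this
      have h2 : HasDerivAt (fun τ => R i j (x τ i))
          (deriv (R i j) (x t i) * deriv (fun s => x s i) t) t := by
        have := ((((hRC1 i j hji.symm).differentiable one_ne_zero) (x t i)).hasDerivAt).comp t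
          (((hx i) t).hasDerivAt)
        exact this
      exact h1.sub h2
    have hro : HasDerivAt (fun τ => Rout i (x τ i))
        (deriv (Rout i) (x t i) * deriv (fun s => x s i) t) t := by
      have := ((((hRoC1 i).differentiable one_ne_zero) (x t i)).hasDerivAt).comp t
        (((hx i) t).hasDerivAt)
      exact this
    exact (hsum.add_const (u i)).sub hro
  exact soc_core n (fun i τ => deriv (fun s => x s i) τ)
    (fun i j τ => deriv (R i j) (x τ i)) (fun i τ => deriv (Rout i) (x τ i))
    (fun i j t h => hRmono i j h _) (fun i t => hRomono i _)
    (fun i j h => (((hRC1 i j h).continuous_deriv le_rfl).comp (hx i).continuous))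
    (fun i => (((hRoC1 i).continuous_deriv le_rfl).comp (hx i).continuous))
    hv
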